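/- Let K be a commutative ring, S = K[x_1,…,x_n], and φ: S → S a flat K-algebra homomorphism with φ(x_i) = s_i·x_i for elements s_i ∈ S. Let I_n = (x_1,…,x_n) ⊆ S. Then the zeroth homology of the φ-Koszul chain complex satisfies H_0(FK_•(x_1,…,x_n)) ≅ S/I_n as left S[Θ;φ]-modules, where Θ acts on S/I_n via the map induced by φ. -/

import Mathlib

/-- The left skew polynomial ring `A[Θ;φ]`. -/
structure LeftSkewPolynomialRing (A : Type*) [CommRing A] (φ : A →+* A)
    (B : Type*) [Ring B] where
  ι : A →+* B
  θ : B
  theta_mul : ∀ a : A, θ * ι a = ι (φ a) * θ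
  basis : Function.Bijective fun f : ℕ →₀ A => f.sum fun i a => ι a * θ ^ i

noncomputable section

namespace PhiKoszul

variable {S : Type*} [CommRing S] {φ : S →+* S} {B : Type*} [Ring B] {n : ℕ}

/-- The left `B`-linear map `B → N` sending `b` to `b • v`. -/
def toSpan {N : Type*} [AddCommGroup N] [Module B N] (v : N) : B →ₗ[B] N where
  toFun b := b • v
  map_add' a b := add_smul a b v
  map_smul' a b := mul_smul a b v

/-- Extension of a family `s : Fin n → S` to `Fin (n+1)`, with value `1` at the last
index (which corresponds to the extra basis vector `u`). -/
def extOne (s : Fin n → S) (j : Fin (n + 1)) : S :=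
  if h : (j : ℕ) < n then s ⟨j, h⟩ else 1

/-- The degree-`l` term `FK_l` of the `φ`-Koszul complex: the free left
`S[Θ;φ]`-module on the `l`-element subsets of `{e_1, …, e_n, u}` (where `u`
corresponds to the last element of `Fin (n+1)`). -/
abbrev FK (B : Type*) [Ring B] (n l : ℕ) : Type _ :=
  {t : Finset (Fin (n + 1)) // t.card = l} →₀ B

/-- The coefficient with which the basis element `T \ {i}` occurs (up to sign) in the
image of the basis element `T` under the `φ`-Koszul differential: deleting `e_i` from a
wedge without `u` gives `x_i`; deleting `e_i` from a wedge with `u` gives `φ(x_i)`;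
deleting `u` gives `Θ - s_{j_1}⋯s_{j_{l-1}}`. -/
def coeff (sk : LeftSkewPolynomialRing S φ B) (x s : Fin n → S)
    (T : Finset (Fin (n + 1))) (i : Fin (n + 1)) : B :=
  if h : (i : ℕ) < n then
    (if Fin.last n ∈ T then sk.ι (φ (x ⟨i, h⟩)) else sk.ι (x ⟨i, h⟩))
  else sk.θ - sk.ι (∏ j ∈ T.erase (Fin.last n), extOne s j)

/-- The image of the basis element `T` under the `φ`-Koszul differential
`∂ : FK_{l+1} → FK_l`, namely `Σ_{i ∈ T} (-1)^{|{j ∈ T : j < i}|} coeff(T,i) • (T\{i})`. -/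
def tgt (sk : LeftSkewPolynomialRing S φ B) (x s : Fin n → S) (l : ℕ)
    (T : {t : Finset (Fin (n + 1)) // t.card = l + 1}) : FK B n l :=
  ∑ i ∈ T.1.attach,
    ((-1 : ℤ) ^ (T.1.filter fun j => j < i.1).card) •
      Finsupp.single
        ⟨T.1.erase i.1, by rw [Finset.card_erase_of_mem i.2, T.2]; rfl⟩
        (coeff sk x s T.1 i.1)

/-- The `φ`-Koszul differential `∂_{l+1} : FK_{l+1} → FK_l`, as a map of left
`S[Θ;φ]`-modules. -/
def FKd (sk : LeftSkewPolynomialRing S φ B) (x s : Fin n → S) (l : ℕ) :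
    FK B n (l + 1) →ₗ[B] FK B n l :=
  Finsupp.lsum ℕ fun T => toSpan (tgt sk x s l T)

end PhiKoszul

end

open PhiKoszul MvPolynomial

/-- The ideal `I_n = (x_1, …, x_n)` of `S = K[x_1,…,x_n]`. -/
noncomputable abbrev varIdeal (K : Type*) [CommRing K] (n : ℕ) : Ideal (MvPolynomial (Fin n) K) :=
  Ideal.span (Set.range (X : Fin n → MvPolynomial (Fin n) K))

set_option maxHeartbeats 2000000 in
/-- Let `K` be a commutative ring, `S = K[x_1,…,x_n]`, `φ : S → S` a flat `K`-algebra
homomorphism with `φ(x_i) = s_i·x_i`, and `I_n = (x_1,…,x_n)`.  Then the zeroth homology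
of the `φ`-Koszul chain complex, `FK_0 / im ∂_1`, is isomorphic to `S/I_n` as left
`S[Θ;φ]`-modules, where `Θ` acts on `S/I_n` via the map induced by `φ`. -/
theorem phiKoszul_homology_zero
    {K : Type*} [CommRing K] {n : ℕ}
    (φ : MvPolynomial (Fin n) K →ₐ[K] MvPolynomial (Fin n) K)
    (hflat : (φ : MvPolynomial (Fin n) K →+* MvPolynomial (Fin n) K).Flat)
    (s : Fin n → MvPolynomial (Fin n) K)
    (hs : ∀ i, φ (X i) = s i * X i)
    {B : Type*} [Ring B]
    (sk : LeftSkewPolynomialRing (MvPolynomial (Fin n) K)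
      (φ : MvPolynomial (Fin n) K →+* MvPolynomial (Fin n) K) B)
    -- the left `S[Θ;φ]`-module structure of `S/I_n`:
    (inst : Module B (MvPolynomial (Fin n) K ⧸ varIdeal K n))
    (hι : ∀ (g : MvPolynomial (Fin n) K)
        (m : MvPolynomial (Fin n) K ⧸ varIdeal K n),
      (letI := inst; sk.ι g • m) = Ideal.Quotient.mk (varIdeal K n) g * m)
    (hθ : ∀ g : MvPolynomial (Fin n) K,
      (letI := inst; sk.θ • (Ideal.Quotient.mk (varIdeal K n) g)) =
        Ideal.Quotient.mk (varIdeal K n) (φ g)) :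
    letI := inst
    Nonempty ((FK B n 0 ⧸ LinearMap.range (FKd sk X s 0)) ≃ₗ[B]
      (MvPolynomial (Fin n) K ⧸ varIdeal K n)) := by
  classical
  letI := inst
  replace hι : ∀ (g : MvPolynomial (Fin n) K)
      (m : MvPolynomial (Fin n) K ⧸ varIdeal K n),
      sk.ι g • m = Ideal.Quotient.mk (varIdeal K n) g * m := hι
  replace hθ : ∀ g : MvPolynomial (Fin n) K,
      sk.θ • (Ideal.Quotient.mk (varIdeal K n) g) =
        Ideal.Quotient.mk (varIdeal K n) (φ g) := hθ
  set e₀ : {t : Finset (Fin (n + 1)) // t.card = 0} := ⟨∅, rfl⟩ with he₀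
  have huniq : ∀ T : {t : Finset (Fin (n + 1)) // t.card = 0}, T = e₀ := fun T =>
    Subtype.ext (Finset.card_eq_zero.mp T.2)
  set ψ : FK B n 0 →ₗ[B] (MvPolynomial (Fin n) K ⧸ varIdeal K n) :=
    Finsupp.lsum ℕ (fun _ => toSpan (Ideal.Quotient.mk (varIdeal K n) 1)) with hψ
  have hψsingle : ∀ (T) (b : B),
      ψ (Finsupp.single T b) = b • (Ideal.Quotient.mk (varIdeal K n) 1) := fun T b =>
    Finsupp.lsum_single _ _ _ _
  have hsurj : Function.Surjective ψ := by
    intro q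
    obtain ⟨g, rfl⟩ := Ideal.Quotient.mk_surjective q
    refine ⟨Finsupp.single e₀ (sk.ι g), ?_⟩
    rw [hψsingle, hι, map_one, mul_one]
  set J : Submodule B B :=
    Submodule.span B ((Set.range fun i : Fin n => sk.ι (X i)) ∪ {sk.θ - 1}) with hJ
  have hθJ : sk.θ - 1 ∈ J := Submodule.subset_span (Or.inr rfl)
  have hxJ : ∀ i : Fin n, sk.ι (X i) ∈ J := fun i =>
    Submodule.subset_span (Or.inl ⟨i, rfl⟩)
  have hθpow : ∀ i : ℕ, sk.θ ^ i - 1 ∈ J := by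
    intro i
    induction i with
    | zero => simpa using J.zero_mem
    | succ i ih =>
        have : sk.θ ^ (i + 1) - 1 = sk.θ • (sk.θ ^ i - 1) + (sk.θ - 1) := by
          rw [smul_eq_mul, mul_sub, mul_one, ← pow_succ']
          abel
        rw [this]
        exact J.add_mem (J.smul_mem _ ih) hθJ
  have hXI : ∀ i : Fin n, (X i : MvPolynomial (Fin n) K) ∈ varIdeal K n := fun i =>
    Ideal.subset_span ⟨i, rfl⟩
  have hkill : ∀ c ∈ J,
      c • (Ideal.Quotient.mk (varIdeal K n) 1) = 0 := by
    intro c hc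
    induction hc using Submodule.span_induction with
    | mem x hx =>
        rcases hx with ⟨i, rfl⟩ | hx
        · show sk.ι (X i) • (Ideal.Quotient.mk (varIdeal K n) 1) = 0
          rw [hι, map_one, mul_one, Ideal.Quotient.eq_zero_iff_mem]
          exact hXI i
        · rcases hx with rfl
          rw [sub_smul, hθ, map_one, one_smul, sub_self]
    | zero => rw [zero_smul]
    | add x y hx hy ihx ihy => rw [add_smul, ihx, ihy, add_zero]
    | smul a x hx ih => rw [smul_eq_mul, mul_smul, ih, smul_zero]
  have hIJ : ∀ g ∈ varIdeal K n, sk.ι g ∈ J := by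
    intro g hg
    induction hg using Submodule.span_induction with
    | mem x hx => rcases hx with ⟨i, rfl⟩; exact hxJ i
    | zero => rw [map_zero]; exact J.zero_mem
    | add x y hx hy ihx ihy => rw [map_add]; exact J.add_mem ihx ihy
    | smul a x hx ih =>
        rw [smul_eq_mul, map_mul]
        exact J.smul_mem (sk.ι a) ih
  have hbJ : ∀ b : B, b • (Ideal.Quotient.mk (varIdeal K n) 1) = 0 → b ∈ J := by
    intro b hb
    obtain ⟨f, hf⟩ := sk.basis.surjective b
    set g : MvPolynomial (Fin n) K := f.sum fun _ a => a with hg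
    have h1 : b - sk.ι g = ∑ i ∈ f.support, sk.ι (f i) • (sk.θ ^ i - 1) := by
      have hb' : b = ∑ i ∈ f.support, sk.ι (f i) * sk.θ ^ i := by rw [← hf]; rfl
      have hgι : sk.ι g = ∑ i ∈ f.support, sk.ι (f i) := by
        rw [hg]
        exact map_sum sk.ι _ _
      rw [hb', hgι, ← Finset.sum_sub_distrib]
      exact Finset.sum_congr rfl fun i _ => by
        rw [smul_eq_mul, mul_sub, mul_one]
    have h1J : b - sk.ι g ∈ J := by
      rw [h1]
      exact Submodule.sum_mem _ fun i _ => J.smul_mem _ (hθpow i)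
    have h2 : sk.ι g • (Ideal.Quotient.mk (varIdeal K n) 1) = 0 := by
      have h1' := hkill _ h1J
      rw [sub_smul, hb, zero_sub, neg_eq_zero] at h1'
      exact h1'
    have hgI : g ∈ varIdeal K n := by
      rw [hι, map_one, mul_one, Ideal.Quotient.eq_zero_iff_mem] at h2
      exact h2
    have hb2 : b = (b - sk.ι g) + sk.ι g := by abel
    rw [hb2]
    exact J.add_mem h1J (hIJ g hgI)
  have hattach : ∀ a : Fin (n + 1), ({a} : Finset (Fin (n + 1))).attach =
      {⟨a, Finset.mem_singleton_self a⟩} := by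
    intro a
    ext x
    simp only [Finset.mem_attach, Finset.mem_singleton, true_iff]
    exact Subtype.ext (Finset.mem_singleton.mp x.2)
  have htgt : ∀ (a : Fin (n + 1)) (h : ({a} : Finset (Fin (n + 1))).card = 0 + 1),
      tgt sk X s 0 ⟨{a}, h⟩ = Finsupp.single e₀ (coeff sk X s {a} a) := by
    intro a h
    rw [tgt, hattach a, Finset.sum_singleton]
    have h1 : (Finset.filter (fun j => j < a) {a}).card = 0 := by
      simp [Finset.filter_singleton]
    have h2 : (⟨({a} : Finset (Fin (n + 1))).erase a, by
        rw [Finset.card_erase_of_mem (Finset.mem_singleton_self a), h]⟩ :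
        {t : Finset (Fin (n + 1)) // t.card = 0}) = e₀ := huniq _
    rw [h1, h2, pow_zero]
    exact one_smul ℤ _
  have hcoeff_lt : ∀ (i : Fin n),
      coeff sk X s {(Fin.castSucc i)} (Fin.castSucc i) = sk.ι (X i) := by
    intro i
    unfold PhiKoszul.coeff
    rw [dif_pos (by exact i.2 : ((Fin.castSucc i : Fin (n+1)) : ℕ) < n)]
    rw [if_neg]
    · congr 1
    · rw [Finset.mem_singleton]
      intro hc
      have := congrArg Fin.val hc
      simp [Fin.last] at this
      omega
  have hcoeff_last : coeff sk X s {Fin.last n} (Fin.last n) = sk.θ - 1 := by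
    unfold PhiKoszul.coeff
    rw [dif_neg (by simp [Fin.last])]
    rw [Finset.erase_singleton, Finset.prod_empty, map_one]
  have hFKd : ∀ (T) (b : B), FKd sk X s 0 (Finsupp.single T b) = b • tgt sk X s 0 T := by
    intro T b
    rw [FKd, Finsupp.lsum_single]
    rfl
  have hcomp : ψ.comp (FKd sk X s 0) = 0 := by
    apply Finsupp.lhom_ext
    intro T b
    rw [LinearMap.comp_apply, LinearMap.zero_apply, hFKd, LinearMap.map_smul]
    obtain ⟨a, ha⟩ := Finset.card_eq_one.mp T.2
    have hT : T = ⟨{a}, ha ▸ T.2⟩ := Subtype.ext ha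
    rw [hT, htgt a, hψsingle]
    by_cases hc : (a : ℕ) < n
    · have hac : a = Fin.castSucc ⟨a, hc⟩ := by
        apply Fin.ext; simp
      rw [hac, hcoeff_lt, hι, map_one, mul_one, Ideal.Quotient.eq_zero_iff_mem.mpr (hXI _),
        smul_zero]
    · have haL : a = Fin.last n := by
        apply Fin.ext
        have := a.2
        simp only [Fin.last]
        omega
      rw [haL, hcoeff_last, sub_smul, hθ, map_one, one_smul, sub_self, smul_zero]
  have hle1 : LinearMap.range (FKd sk X s 0) ≤ LinearMap.ker ψ := by
    rintro _ ⟨f, rfl⟩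
    rw [LinearMap.mem_ker, ← LinearMap.comp_apply, hcomp, LinearMap.zero_apply]
  have hJrange : ∀ b ∈ J,
      Finsupp.single e₀ b ∈ LinearMap.range (FKd sk X s 0) := by
    intro b hb
    induction hb using Submodule.span_induction with
    | mem x hx =>
        rcases hx with ⟨i, rfl⟩ | hx
        · refine ⟨Finsupp.single ⟨{Fin.castSucc i}, Finset.card_singleton _⟩ 1, ?_⟩
          rw [hFKd, one_smul, htgt, hcoeff_lt]
        · rcases hx with rfl
          refine ⟨Finsupp.single ⟨{Fin.last n}, Finset.card_singleton _⟩ 1, ?_⟩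
          rw [hFKd, one_smul, htgt, hcoeff_last]
    | zero =>
        rw [Finsupp.single_zero]
        exact (LinearMap.range _).zero_mem
    | add x y hx hy ihx ihy =>
        rw [Finsupp.single_add]
        exact (LinearMap.range _).add_mem ihx ihy
    | smul a x hx ih =>
        rw [← Finsupp.smul_single]
        exact (LinearMap.range _).smul_mem a ih
  have hle2 : LinearMap.ker ψ ≤ LinearMap.range (FKd sk X s 0) := by
    intro f hf
    have hfe : f = Finsupp.single e₀ (f e₀) := by
      ext T
      rw [huniq T, Finsupp.single_eq_same]
    rw [LinearMap.mem_ker, hfe, hψsingle] at hf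
    rw [hfe]
    exact hJrange _ (hbJ _ hf)
  have heq : LinearMap.range (FKd sk X s 0) = LinearMap.ker ψ := le_antisymm hle1 hle2
  exact ⟨(Submodule.quotEquivOfEq _ _ heq).trans (ψ.quotKerEquivOfSurjective hsurj)⟩
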